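/- Let C be a regular, irreducible curve that is projective over a field k, with function field F = k(C), arithmetic genus t, and a k-rational point O, and fix functions f_R as below for all closed points R ≠ O of degree ≥ t+1. If P ≠ O has deg(P) = d ≥ 3t + 1 and Q ≠ O satisfies 2t + 1 ≤ deg(Q) ≤ d, then the symbol {f_P, f_Q} lies in L_{d−1} + ⟨ {f_R, l} : l a nonzero element of RR_{d−1} and R ≠ O a closed point with 2t + 1 ≤ deg(R) ≤ d ⟩, as a subgroup of K₂(F). -/

import Mathlib

open scoped TensorProduct

noncomputable section

/-- The set of Steinberg relations in `Fˣ ⊗_ℤ Fˣ` (written additively):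
the elements `a ⊗ b` with `a + b = 1` in `F`. -/
def SteinbergSet (F : Type*) [Field F] :
    Set (TensorProduct ℤ (Additive Fˣ) (Additive Fˣ)) :=
  { x | ∃ a b : Fˣ, (a : F) + (b : F) = 1 ∧
      x = Additive.ofMul a ⊗ₜ[ℤ] Additive.ofMul b }

/-- Milnor's `K₂` of a field, via Matsumoto's presentation. -/
abbrev K2 (F : Type*) [Field F] :=
  (TensorProduct ℤ (Additive Fˣ) (Additive Fˣ)) ⧸
    Submodule.span ℤ (SteinbergSet F)

/-- The symbol `{f, g}` in `K₂(F)`. -/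
def symbol {F : Type*} [Field F] (f g : Fˣ) : K2 F :=
  Submodule.Quotient.mk (Additive.ofMul f ⊗ₜ[ℤ] Additive.ofMul g)

/-- The degree of a divisor `D` on the curve: `∑_P deg(P) · D(P)`,
where `deg P = [k(P) : k]`. -/
def divDeg (k : Type*) [Field k] {Pt : Type*} (res : Pt → Type*)
    [∀ P, Field (res P)] [∀ P, Algebra k (res P)] (D : Pt →₀ ℤ) : ℤ :=
  ∑ᶠ P, (Module.finrank k (res P) : ℤ) * D P

/-- Axioms for a regular, irreducible curve `C`, projective over a field `k`, with
`H⁰(C, O_C) = k`, presented through: its function field `F = k(C)`, its set `Pt` of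
closed points, the residue fields `res P = k(P)`, the normalized valuations `ord P`,
the evaluation maps `ev P` (evaluation at `P` of functions regular at `P`), the
Riemann-Roch spaces `L D = H⁰(C, O_C(D))`, and the arithmetic genus
`t = dim_k H¹(C, O_C)`, characterized by the Riemann-Roch relations. -/
structure IsProjCurve (k F : Type*) [Field k] [Field F] [Algebra k F]
    {Pt : Type*} (res : Pt → Type*) [∀ P, Field (res P)] [∀ P, Algebra k (res P)]
    (ord : Pt → F → ℤ) (ev : ∀ P, F → res P)
    (L : (Pt →₀ ℤ) → Submodule k F) (t : ℕ) : Prop where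
  finiteDimensional_res : ∀ P, FiniteDimensional k (res P)
  ord_mul : ∀ P (f g : F), f ≠ 0 → g ≠ 0 → ord P (f * g) = ord P f + ord P g
  ord_add : ∀ P (f g : F), f ≠ 0 → g ≠ 0 → f + g ≠ 0 →
      min (ord P f) (ord P g) ≤ ord P (f + g)
  ord_algebraMap : ∀ P (c : k), c ≠ 0 → ord P (algebraMap k F c) = 0
  ord_uniformizer : ∀ P, ∃ f : F, f ≠ 0 ∧ ord P f = 1
  ord_separates : ∀ P Q, (∀ f : F, ord P f = ord Q f) → P = Q
  support_finite : ∀ f : F, f ≠ 0 → {P | ord P f ≠ 0}.Finite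
  degree_formula : ∀ f : F, f ≠ 0 →
      ∑ᶠ P, (Module.finrank k (res P) : ℤ) * ord P f = 0
  ev_zero : ∀ P, ev P 0 = 0
  ev_one : ∀ P, ev P 1 = 1
  ev_add : ∀ P (f g : F), f ≠ 0 → g ≠ 0 → 0 ≤ ord P f → 0 ≤ ord P g →
      ev P (f + g) = ev P f + ev P g
  ev_mul : ∀ P (f g : F), f ≠ 0 → g ≠ 0 → 0 ≤ ord P f → 0 ≤ ord P g →
      ev P (f * g) = ev P f * ev P g
  ev_algebraMap : ∀ P (c : k), ev P (algebraMap k F c) = algebraMap k (res P) c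
  ev_eq_zero_iff : ∀ P (f : F), f ≠ 0 → 0 ≤ ord P f → (ev P f = 0 ↔ 0 < ord P f)
  ev_surjective : ∀ P (y : res P), ∃ f : F, f ≠ 0 ∧ 0 ≤ ord P f ∧ ev P f = y
  mem_L : ∀ (D : Pt →₀ ℤ) (f : F), f ∈ L D ↔ (f ≠ 0 → ∀ P, 0 ≤ D P + ord P f)
  finiteDimensional_L : ∀ D, FiniteDimensional k (L D)
  global_sections : ∀ f : F, f ∈ L 0 ↔ ∃ c : k, algebraMap k F c = f
  rr_ineq : ∀ D : Pt →₀ ℤ,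
      divDeg k res D + 1 - t ≤ (Module.finrank k (L D) : ℤ)
  rr_eq : ∀ D : Pt →₀ ℤ, 2 * (t : ℤ) - 2 < divDeg k res D →
      (Module.finrank k (L D) : ℤ) = divDeg k res D + 1 - t

/-- `T` is the tame symbol `K₂(F) → ∐_{P} k(P)^*`: it is determined by
`T_P({f,g}) = (-1)^{ord_P(f)·ord_P(g)} (f^{ord_P(g)} / g^{ord_P(f)})(P)`. -/
def IsTameSymbol {F : Type*} [Field F] {Pt : Type*} {res : Pt → Type*}
    [∀ P, Field (res P)]
    (ord : Pt → F → ℤ) (ev : ∀ P, F → res P)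
    (T : K2 F →+ Π₀ P : Pt, Additive ((res P)ˣ)) : Prop :=
  ∀ (f g : Fˣ) (P : Pt),
    ((Additive.toMul (T (symbol f g) P) : (res P)ˣ) : res P) =
      ev P (((-1 : Fˣ) ^ (ord P (f : F) * ord P (g : F)) *
        f ^ (ord P (g : F)) * g ^ (-ord P (f : F)) : Fˣ) : F)

/-- `L_d`: the subgroup of `K₂(F)` generated by the symbols `{l, m}` with `l, m`
nonzero elements of the Riemann-Roch space `H⁰(C, O_C(d(O)))`. -/
def Lsub {k F : Type*} [Field k] [Field F] [Algebra k F] {Pt : Type*}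
    (L : (Pt →₀ ℤ) → Submodule k F) (O : Pt) (d : ℤ) : AddSubgroup (K2 F) :=
  AddSubgroup.closure
    { x | ∃ l m : Fˣ, (l : F) ∈ L (Finsupp.single O d) ∧
        (m : F) ∈ L (Finsupp.single O d) ∧ x = symbol l m }

section S12K2
variable {F : Type*} [Field F]

lemma s12_symbol_mul_left (a b c : Fˣ) : symbol (a * b) c = symbol a c + symbol b c := by
  simp [symbol, TensorProduct.add_tmul, ← Submodule.Quotient.mk_add]

lemma s12_symbol_mul_right (a b c : Fˣ) : symbol a (b * c) = symbol a b + symbol a c := by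
  simp [symbol, TensorProduct.tmul_add, ← Submodule.Quotient.mk_add]

lemma s12_symbol_one_left (b : Fˣ) : symbol 1 b = 0 := by
  simp [symbol]

lemma s12_symbol_one_right (a : Fˣ) : symbol a 1 = 0 := by
  simp [symbol]

lemma s12_symbol_inv_left (a b : Fˣ) : symbol a⁻¹ b = - symbol a b := by
  have h := s12_symbol_mul_left a⁻¹ a b
  rw [inv_mul_cancel, s12_symbol_one_left] at h
  exact eq_neg_of_add_eq_zero_left h.symm

lemma s12_symbol_inv_right (a b : Fˣ) : symbol a b⁻¹ = - symbol a b := by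
  have h := s12_symbol_mul_right a b⁻¹ b
  rw [inv_mul_cancel, s12_symbol_one_right] at h
  exact eq_neg_of_add_eq_zero_left h.symm

lemma s12_steinberg (a b : Fˣ) (h : (a : F) + (b : F) = 1) : symbol a b = 0 :=
  (Submodule.Quotient.mk_eq_zero _).mpr (Submodule.subset_span ⟨a, b, h, rfl⟩)

lemma s12_symbol_neg_self (a : Fˣ) : symbol a (-a) = 0 := by
  by_cases ha : a = 1
  · subst ha; exact s12_symbol_one_left _
  · have hx1 : (a : F) ≠ 1 := fun h => ha (Units.ext h)
    have hu0 : (1 : F) - (a : F) ≠ 0 := sub_ne_zero.mpr (Ne.symm hx1)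
    have hxinv : ((a : F))⁻¹ ≠ 1 := by
      simpa using hx1
    have hs0 : (1 : F) - ((a : F))⁻¹ ≠ 0 := sub_ne_zero.mpr (Ne.symm hxinv)
    set u : Fˣ := Units.mk0 _ hu0 with hu
    set s : Fˣ := Units.mk0 _ hs0 with hs
    have h1 : symbol a u = 0 := s12_steinberg a u (by simp [hu])
    have h2 : symbol a⁻¹ s = 0 := s12_steinberg a⁻¹ s (by simp [hs])
    have h3 : symbol a s = 0 := by
      have := s12_symbol_inv_left a s
      rw [h2] at this
      exact (neg_eq_zero.mp this.symm)
    have h4 : -a = u * s⁻¹ := by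
      have hane : (a : F) ≠ 0 := Units.ne_zero a
      apply Units.ext
      have hval : ((u * s⁻¹ : Fˣ) : F) = (1 - (a:F)) * ((1 : F) - ((a:F))⁻¹)⁻¹ := by
        simp [hu, hs]
      rw [Units.val_neg, hval, eq_comm, mul_inv_eq_iff_eq_mul₀ hs0]
      field_simp
      ring
    rw [h4, s12_symbol_mul_right, h1, s12_symbol_inv_right, h3]
    simp

lemma s12_symbol_anticomm (a b : Fˣ) : symbol a b = - symbol b a := by
  have h := s12_symbol_neg_self (a * b)
  have e1 : -(a * b) = a * (-b) := by rw [mul_neg]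
  have e2 : -(a * b) = (-a) * b := by rw [neg_mul]
  have h2 : symbol a (-(a*b)) + symbol b (-(a*b)) = 0 := by
    rw [← s12_symbol_mul_left, h]
  rw [show symbol a (-(a*b)) = symbol a (-a) + symbol a b by
        rw [show -(a*b) = (-a) * b from e2, s12_symbol_mul_right],
      s12_symbol_neg_self, zero_add,
      show symbol b (-(a*b)) = symbol b a + symbol b (-b) by
        rw [show -(a*b) = a * (-b) from e1, s12_symbol_mul_right],
      s12_symbol_neg_self, add_zero] at h2
  exact eq_neg_of_add_eq_zero_left h2

lemma s12_symbol_self (a : Fˣ) : symbol a a = symbol a (-1) := by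
  have : a = (-1) * (-a) := by rw [neg_one_mul, neg_neg]
  calc symbol a a = symbol a ((-1) * (-a)) := by rw [← this]
    _ = symbol a (-1) + symbol a (-a) := s12_symbol_mul_right _ _ _
    _ = symbol a (-1) := by rw [s12_symbol_neg_self, add_zero]

end S12K2

section S12Curve

variable {k F : Type*} [Field k] [Field F] [Algebra k F]
    {Pt : Type*} {res : Pt → Type*} [∀ P, Field (res P)] [∀ P, Algebra k (res P)]
    {ord : Pt → F → ℤ} {ev : ∀ P, F → res P}
    {L : (Pt →₀ ℤ) → Submodule k F} {t : ℕ}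

lemma s12_divDeg_single (X : Pt) (c : ℤ) :
    divDeg k res (Finsupp.single X c) = (Module.finrank k (res X) : ℤ) * c := by
  unfold divDeg
  rw [finsum_eq_single _ X (fun b hb => by
    rw [Finsupp.single_eq_of_ne' (Ne.symm hb), mul_zero])]
  rw [Finsupp.single_eq_same]

lemma s12_divDeg_add (D D' : Pt →₀ ℤ) :
    divDeg k res (D + D') = divDeg k res D + divDeg k res D' := by
  unfold divDeg
  rw [← finsum_add_distrib]
  · apply finsum_congr
    intro P
    rw [Finsupp.add_apply, mul_add]
  · exact Set.Finite.subset (D.finite_support) (fun x hx => by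
      simp only [Function.mem_support] at hx ⊢
      exact fun h0 => hx (by simp [h0]))
  · exact Set.Finite.subset (D'.finite_support) (fun x hx => by
      simp only [Function.mem_support] at hx ⊢
      exact fun h0 => hx (by simp [h0]))

lemma s12_divDeg_neg (D : Pt →₀ ℤ) :
    divDeg k res (-D) = - divDeg k res D := by
  have h := s12_divDeg_add (k := k) (res := res) D (-D)
  rw [add_neg_cancel] at h
  have h0 : divDeg k res (0 : Pt →₀ ℤ) = 0 := by
    unfold divDeg
    rw [finsum_eq_zero_of_forall_eq_zero]
    intro P; simp
  rw [h0] at h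
  linarith

lemma s12_L_eq_zero (hC : IsProjCurve k F res ord ev L t) {D : Pt →₀ ℤ}
    (hD : divDeg k res D < 0) {f : F} (hf : f ∈ L D) : f = 0 := by
  by_contra h0
  have hmem := (hC.mem_L D f).mp hf h0
  have hsupp1 : (Function.support fun P => (Module.finrank k (res P) : ℤ) * D P).Finite :=
    Set.Finite.subset (D.finite_support) (fun x hx => by
      simp only [Function.mem_support] at hx ⊢
      exact fun hc => hx (by simp [hc]))
  have hsupp2 : (Function.support fun P => (Module.finrank k (res P) : ℤ) * ord P f).Finite :=
    Set.Finite.subset (hC.support_finite f h0) (fun x hx => by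
      simp only [Function.mem_support, Set.mem_setOf_eq] at hx ⊢
      exact fun hc => hx (by simp [hc]))
  have hsum : ∑ᶠ P, ((Module.finrank k (res P) : ℤ) * (D P + ord P f)) = divDeg k res D := by
    rw [finsum_congr (fun P => mul_add (Module.finrank k (res P) : ℤ) (D P) (ord P f)),
      finsum_add_distrib hsupp1 hsupp2, hC.degree_formula f h0, add_zero]
    rfl
  have hpos : (0:ℤ) ≤ divDeg k res D := by
    rw [← hsum]
    exact finsum_nonneg fun P => mul_nonneg (by positivity) (hmem P)
  omega

lemma s12_L_mono (hC : IsProjCurve k F res ord ev L t) {D D' : Pt →₀ ℤ}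
    (h : ∀ S, D S ≤ D' S) : L D ≤ L D' := by
  intro f hf
  rw [hC.mem_L]
  intro hne S
  have h1 := (hC.mem_L D f).mp hf hne S
  have h2 := h S
  omega

lemma s12_mem_L_div (hC : IsProjCurve k F res ord ev L t) {X g : F}
    (hX0 : X ≠ 0) (hg0 : g ≠ 0) {D D' : Pt →₀ ℤ} (hXD : X ∈ L D)
    (h : ∀ S, D S + ord S g ≤ D' S) : X / g ∈ L D' := by
  rw [hC.mem_L]
  intro hne S
  have hXg : X / g * g = X := div_mul_cancel₀ X hg0
  have hord : ord S X = ord S (X / g) + ord S g := by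
    have h2 := hC.ord_mul S (X / g) g hne hg0
    rw [hXg] at h2
    exact h2
  have h1 := (hC.mem_L D X).mp hXD hX0 S
  have h2 := h S
  omega

end S12Curve
/-- Lemma `PQlemma`(1).  Let `C` be a regular, irreducible curve,
projective over `k`, with function field `F`, arithmetic genus `t` and a `k`-rational
point `O`, and fix for every closed point `R ≠ O` with `deg(R) ≥ t + 1` a function
`f_R` with divisor `(R) - D_R - (deg(R) - t)(O)`, `D_R` effective of degree `t`.
If `deg(P) = d ≥ 3t + 1` and `2t + 1 ≤ deg(Q) ≤ d` (with `P, Q ≠ O`), then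
`{f_P, f_Q}` lies in
`L_{d-1} + ⟨{f_R, l} : l ∈ RR_{d-1}^*, 2t + 1 ≤ deg(R) ≤ d⟩`. -/
theorem statement12 (k F : Type*) [Field k] [Field F] [Algebra k F]
    {Pt : Type*} (res : Pt → Type*) [∀ P, Field (res P)] [∀ P, Algebra k (res P)]
    (ord : Pt → F → ℤ) (ev : ∀ P, F → res P)
    (L : (Pt →₀ ℤ) → Submodule k F) (t : ℕ)
    (hC : IsProjCurve k F res ord ev L t)
    (O : Pt) (hO : Module.finrank k (res O) = 1)
    (fR : Pt → Fˣ) (DR : Pt → (Pt →₀ ℤ))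
    (hfR : ∀ R, R ≠ O → t + 1 ≤ Module.finrank k (res R) →
      (∀ Q, 0 ≤ DR R Q) ∧ divDeg k res (DR R) = t ∧
      ∀ Q, ord Q (fR R : F) =
        ((Finsupp.single R 1 - DR R -
          ((Module.finrank k (res R) : ℤ) - t) • Finsupp.single O 1 : Pt →₀ ℤ)) Q)
    (P Q : Pt) (hP : P ≠ O) (hQ : Q ≠ O)
    (d : ℕ) (hd : d = Module.finrank k (res P)) (hd1 : 3 * t + 1 ≤ d)
    (hQ1 : 2 * t + 1 ≤ Module.finrank k (res Q))
    (hQ2 : Module.finrank k (res Q) ≤ d) :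
    symbol (fR P) (fR Q) ∈
      Lsub L O ((d : ℤ) - 1) ⊔ AddSubgroup.closure
        { x | ∃ (R : Pt) (l : Fˣ), R ≠ O ∧
            2 * t + 1 ≤ Module.finrank k (res R) ∧ Module.finrank k (res R) ≤ d ∧
            (l : F) ∈ L (Finsupp.single O ((d : ℤ) - 1)) ∧
            x = symbol (fR R) l } := by
  classical
  set e := Module.finrank k (res Q) with heq
  -- facts about f_P and f_Q
  obtain ⟨hDRP, hDRPdeg, hordP⟩ := hfR P hP (by omega)
  obtain ⟨hDRQ, hDRQdeg, hordQ⟩ := hfR Q hQ (by omega)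
  have hd1' : (3 * (t:ℤ) + 1) ≤ (d:ℤ) := by exact_mod_cast hd1
  have hQ1' : (2 * (t:ℤ) + 1) ≤ (e:ℤ) := by exact_mod_cast hQ1
  have hQ2' : (e:ℤ) ≤ (d:ℤ) := by exact_mod_cast hQ2
  -- divisors
  set DU : Pt →₀ ℤ := Finsupp.single O ((d : ℤ) - 1) with hDUdef
  set DV : Pt →₀ ℤ := Finsupp.single O ((d : ℤ) + e - t - 1) - Finsupp.single Q 1 with hDVdef
  set DA : Pt →₀ ℤ := Finsupp.single O (2 * (d : ℤ) - t - 1) with hDAdef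
  set DS : Pt →₀ ℤ := Finsupp.single O (2 * (d : ℤ) - t - 1) - Finsupp.single P 1 with hDSdef
  -- degrees
  have hdegDU : divDeg k res DU = (d : ℤ) - 1 := by
    rw [hDUdef, s12_divDeg_single, hO]; push_cast; ring
  have hdegDA : divDeg k res DA = 2 * (d : ℤ) - t - 1 := by
    rw [hDAdef, s12_divDeg_single, hO]; push_cast; ring
  have hdegDV : divDeg k res DV = (d : ℤ) - t - 1 := by
    rw [hDVdef, sub_eq_add_neg, s12_divDeg_add, s12_divDeg_neg,
      s12_divDeg_single, s12_divDeg_single, hO, ← heq]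
    push_cast; ring
  have hdegDS : divDeg k res DS = (d : ℤ) - t - 1 := by
    rw [hDSdef, sub_eq_add_neg, s12_divDeg_add, s12_divDeg_neg,
      s12_divDeg_single, s12_divDeg_single, hO, ← hd]
    push_cast; ring
  -- submodules
  haveI := hC.finiteDimensional_L DU
  haveI := hC.finiteDimensional_L DV
  haveI := hC.finiteDimensional_L DS
  haveI := hC.finiteDimensional_L DA
  haveI : FiniteDimensional k ↥(L DS ⊔ L DU) := Submodule.finiteDimensional_sup _ _
  -- inclusions into the ambient space L DA
  have hU_le : L DU ≤ L DA := s12_L_mono hC (by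
    intro S
    rw [hDUdef, hDAdef]
    simp only [Finsupp.single_apply]
    split <;> omega)
  have hS_le : L DS ≤ L DA := s12_L_mono hC (by
    intro S
    rw [hDSdef, hDAdef]
    simp only [Finsupp.sub_apply, Finsupp.single_apply]
    split <;> split <;> omega)
  have hV_le : L DV ≤ L DA := s12_L_mono hC (by
    intro S
    rw [hDVdef, hDAdef]
    rcases eq_or_ne O S with h1 | h1
    · subst h1
      rw [Finsupp.sub_apply, Finsupp.single_eq_same, Finsupp.single_eq_same,
        Finsupp.single_eq_of_ne' hQ]
      omega
    · rw [Finsupp.sub_apply, Finsupp.single_eq_of_ne' h1, Finsupp.single_eq_of_ne' h1]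
      simp only [Finsupp.single_apply]
      split <;> omega)
  -- L DS ⊓ L DU = ⊥
  have hSU_bot : L DS ⊓ L DU = ⊥ := by
    rw [eq_bot_iff]
    rintro f hf
    obtain ⟨hf1, hf2⟩ := Submodule.mem_inf.mp hf
    have hdeg0 : divDeg k res (Finsupp.single O ((d : ℤ) - 1) - Finsupp.single P 1) < 0 := by
      rw [sub_eq_add_neg, s12_divDeg_add, s12_divDeg_neg, s12_divDeg_single,
        s12_divDeg_single, hO, ← hd]
      push_cast; omega
    have : f = 0 := by
      apply s12_L_eq_zero hC hdeg0
      rw [hC.mem_L]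
      intro hne S
      have a1 := (hC.mem_L DS f).mp hf1 hne S
      have a2 := (hC.mem_L DU f).mp hf2 hne S
      rw [hDSdef] at a1
      rw [hDUdef] at a2
      rcases eq_or_ne O S with h1 | h1
      · rcases eq_or_ne P S with h2 | h2
        · exact absurd (h2.trans h1.symm) hP
        · rw [Finsupp.sub_apply, Finsupp.single_eq_of_ne' h2]
          rw [Finsupp.single_apply] at a2 ⊢
          omega
      · rcases eq_or_ne P S with h2 | h2
        · rw [Finsupp.sub_apply, Finsupp.single_eq_of_ne' h1]
          rw [Finsupp.sub_apply, Finsupp.single_eq_of_ne' h1] at a1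
          omega
        · rw [Finsupp.sub_apply, Finsupp.single_eq_of_ne' h1, Finsupp.single_eq_of_ne' h2]
          rw [Finsupp.single_eq_of_ne' h1] at a2
          omega
    simp [this]
  -- dimension count
  have hrV := hC.rr_ineq DV
  have hrS := hC.rr_ineq DS
  have hrU := hC.rr_ineq DU
  have hrA := hC.rr_eq DA (by rw [hdegDA]; omega)
  rw [hdegDV] at hrV
  rw [hdegDS] at hrS
  rw [hdegDU] at hrU
  rw [hdegDA] at hrA
  have hdim1 : Module.finrank k ↥(L DS ⊔ L DU) + Module.finrank k ↥(L DS ⊓ L DU)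
      = Module.finrank k ↥(L DS) + Module.finrank k ↥(L DU) :=
    Submodule.finrank_sup_add_finrank_inf_eq _ _
  rw [hSU_bot, finrank_bot, add_zero] at hdim1
  have hdim2 : Module.finrank k ↥(L DV ⊔ (L DS ⊔ L DU)) + Module.finrank k ↥(L DV ⊓ (L DS ⊔ L DU))
      = Module.finrank k ↥(L DV) + Module.finrank k ↥(L DS ⊔ L DU) :=
    Submodule.finrank_sup_add_finrank_inf_eq _ _
  have hle : Module.finrank k ↥(L DV ⊔ (L DS ⊔ L DU)) ≤ Module.finrank k ↥(L DA) :=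
    Submodule.finrank_mono (sup_le hV_le (sup_le hS_le hU_le))
  have hneb : L DV ⊓ (L DS ⊔ L DU) ≠ ⊥ := by
    intro hb
    rw [hb, finrank_bot, add_zero] at hdim2
    omega
  obtain ⟨X, hXmem, hX0⟩ := (Submodule.ne_bot_iff _).mp hneb
  obtain ⟨hXV, hXW⟩ := Submodule.mem_inf.mp hXmem
  obtain ⟨Y, hY, u, hu, hYu⟩ := Submodule.mem_sup.mp hXW
  -- membership helpers for the target subgroup
  set M := Lsub L O ((d : ℤ) - 1) ⊔ AddSubgroup.closure
        { x | ∃ (R : Pt) (l : Fˣ), R ≠ O ∧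
            2 * t + 1 ≤ Module.finrank k (res R) ∧ Module.finrank k (res R) ≤ d ∧
            (l : F) ∈ L (Finsupp.single O ((d : ℤ) - 1)) ∧
            x = symbol (fR R) l } with hMdef
  have hMl : ∀ (lu mu : Fˣ), (lu : F) ∈ L DU → (mu : F) ∈ L DU → symbol lu mu ∈ M := by
    intro lu mu hl hm
    refine SetLike.le_def.mp le_sup_left ?_
    exact AddSubgroup.subset_closure ⟨lu, mu, by rw [← hDUdef]; exact hl,
      by rw [← hDUdef]; exact hm, rfl⟩
  have hMg : ∀ (R : Pt) (lu : Fˣ), R ≠ O → 2 * t + 1 ≤ Module.finrank k (res R) →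
      Module.finrank k (res R) ≤ d → (lu : F) ∈ L DU → symbol (fR R) lu ∈ M := by
    intro R lu h1 h2 h3 hl
    refine SetLike.le_def.mp le_sup_right ?_
    exact AddSubgroup.subset_closure ⟨R, lu, h1, h2, h3, by rw [← hDUdef]; exact hl, rfl⟩
  have hMP : ∀ lu : Fˣ, (lu : F) ∈ L DU → symbol (fR P) lu ∈ M :=
    fun lu hl => hMg P lu hP (by omega) (by omega) hl
  have hMQ : ∀ lu : Fˣ, (lu : F) ∈ L DU → symbol (fR Q) lu ∈ M :=
    fun lu hl => hMg Q lu hQ (by omega) (by omega) hl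
  have hMP' : ∀ lu : Fˣ, (lu : F) ∈ L DU → symbol lu (fR P) ∈ M := by
    intro lu hl
    rw [s12_symbol_anticomm]
    exact neg_mem (hMP lu hl)
  have hMQ' : ∀ lu : Fˣ, (lu : F) ∈ L DU → symbol lu (fR Q) ∈ M := by
    intro lu hl
    rw [s12_symbol_anticomm]
    exact neg_mem (hMQ lu hl)
  have hm1 : ((-1 : Fˣ) : F) ∈ L DU := by
    rw [hC.mem_L]
    intro hne S
    have hordm1 : ord S ((-1 : Fˣ) : F) = 0 := by
      have h : ((-1 : Fˣ) : F) = algebraMap k F (-1) := by simp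
      rw [h, hC.ord_algebraMap S (-1 : k) (by norm_num)]
    rw [hordm1, hDUdef]
    simp only [Finsupp.single_apply]
    split <;> omega
  -- pointwise divisor bounds
  have hptQ : ∀ S, DV S + ord S ((fR Q : Fˣ) : F) ≤ DU S := by
    intro S
    rw [hordQ S, hDVdef, hDUdef]
    have hnn := hDRQ S
    rcases eq_or_ne O S with h1 | h1
    · subst h1
      simp only [Finsupp.sub_apply, Finsupp.smul_apply, smul_eq_mul,
        Finsupp.single_eq_same, Finsupp.single_eq_of_ne' hQ, mul_one]
      omega
    · simp only [Finsupp.sub_apply, Finsupp.smul_apply, smul_eq_mul,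
        Finsupp.single_eq_of_ne' h1, mul_zero]
      omega
  have hptP : ∀ S, DS S + ord S ((fR P : Fˣ) : F) ≤ DU S := by
    intro S
    rw [hordP S, ← hd, hDSdef, hDUdef]
    have hnn := hDRP S
    rcases eq_or_ne O S with h1 | h1
    · subst h1
      simp only [Finsupp.sub_apply, Finsupp.smul_apply, smul_eq_mul,
        Finsupp.single_eq_same, Finsupp.single_eq_of_ne' hP, mul_one]
      omega
    · simp only [Finsupp.sub_apply, Finsupp.smul_apply, smul_eq_mul,
        Finsupp.single_eq_of_ne' h1, mul_zero]
      omega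
  -- units
  have hfQne : ((fR Q : Fˣ) : F) ≠ 0 := Units.ne_zero _
  have hfPne : ((fR P : Fˣ) : F) ≠ 0 := Units.ne_zero _
  have hnmem : X / ((fR Q : Fˣ) : F) ∈ L DU := s12_mem_L_div hC hX0 hfQne hXV hptQ
  set Xu : Fˣ := Units.mk0 X hX0 with hXudef
  set nu : Fˣ := Units.mk0 (X / ((fR Q : Fˣ) : F)) (div_ne_zero hX0 hfQne) with hnudef
  have hnval : (nu : F) = X / ((fR Q : Fˣ) : F) := rfl
  have hXu : Xu = fR Q * nu := by
    apply Units.ext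
    rw [Units.val_mul, hnval]
    show X = _
    rw [mul_comm, div_mul_cancel₀ X hfQne]
  by_cases hY0 : Y = 0
  · -- X = u lies in L DU
    have hXU : X ∈ L DU := by
      rw [← hYu, hY0, zero_add]; exact hu
    have hfq : fR Q = Xu * nu⁻¹ := by
      rw [hXu, mul_inv_cancel_right]
    have hexp : symbol (fR P) (fR Q) = symbol (fR P) Xu + symbol (fR P) nu⁻¹ := by
      rw [← s12_symbol_mul_right, ← hfq]
    rw [hexp, s12_symbol_inv_right]
    exact add_mem (hMP Xu hXU) (neg_mem (hMP nu hnmem))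
  · have hwmem : Y / ((fR P : Fˣ) : F) ∈ L DU := s12_mem_L_div hC hY0 hfPne hY hptP
    set vu : Fˣ := Units.mk0 Y hY0 with hvudef
    set wu : Fˣ := Units.mk0 (Y / ((fR P : Fˣ) : F)) (div_ne_zero hY0 hfPne) with hwudef
    have hwval : (wu : F) = Y / ((fR P : Fˣ) : F) := rfl
    have hvu : vu = fR P * wu := by
      apply Units.ext
      rw [Units.val_mul, hwval]
      show Y = _
      rw [mul_comm, div_mul_cancel₀ Y hfPne]
    by_cases hu0 : u = 0
    · -- X = Y = f_P * w
      have hXY : Xu = vu := by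
        apply Units.ext
        show X = Y
        rw [← hYu, hu0, add_zero]
      have hfq : fR Q = fR P * wu * nu⁻¹ := by
        rw [eq_mul_inv_iff_mul_eq, ← hXu, hXY, hvu]
      have hexp : symbol (fR P) (fR Q)
          = symbol (fR P) (fR P) + symbol (fR P) wu + symbol (fR P) nu⁻¹ := by
        rw [← s12_symbol_mul_right, ← s12_symbol_mul_right, ← hfq]
      rw [hexp, s12_symbol_inv_right, s12_symbol_self]
      exact add_mem (add_mem (hMP (-1) hm1) (hMP wu hwmem)) (neg_mem (hMP nu hnmem))
    · -- main case
      set uu : Fˣ := Units.mk0 u hu0 with huudef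
      have hst : ((uu * Xu⁻¹ : Fˣ) : F) + ((vu * Xu⁻¹ : Fˣ) : F) = 1 := by
        rw [Units.val_mul, Units.val_mul, Units.val_inv_eq_inv_val]
        show u * X⁻¹ + Y * X⁻¹ = 1
        rw [← add_mul, add_comm u Y, hYu, mul_inv_cancel₀ hX0]
      have e1 := s12_steinberg _ _ hst
      have e2 : symbol (uu * Xu⁻¹) (vu * Xu⁻¹)
          = symbol uu vu - symbol uu Xu - symbol Xu vu + symbol Xu Xu := by
        simp only [s12_symbol_mul_left, s12_symbol_mul_right, s12_symbol_inv_left,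
          s12_symbol_inv_right, neg_neg]
        abel
      rw [e2] at e1
      have e3 : symbol Xu vu = -symbol (fR P) (fR Q) + symbol (fR Q) wu
          + symbol nu (fR P) + symbol nu wu := by
        rw [hXu, hvu, s12_symbol_mul_left, s12_symbol_mul_right, s12_symbol_mul_right,
          s12_symbol_anticomm (fR Q) (fR P)]
        abel
      have e4 : symbol Xu Xu = symbol (fR Q) (-1) + symbol nu (-1) := by
        rw [s12_symbol_self, hXu, s12_symbol_mul_left]
      have e5 : symbol uu vu = symbol uu (fR P) + symbol uu wu := by
        rw [hvu, s12_symbol_mul_right]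
      have e6 : symbol uu Xu = symbol uu (fR Q) + symbol uu nu := by
        rw [hXu, s12_symbol_mul_right]
      rw [e3, e4, e5, e6] at e1
      have final : symbol (fR P) (fR Q)
          = -(symbol uu (fR P) + symbol uu wu) + (symbol uu (fR Q) + symbol uu nu)
            + symbol (fR Q) wu + symbol nu (fR P) + symbol nu wu
            - (symbol (fR Q) (-1) + symbol nu (-1)) := by
        rw [← sub_eq_zero, ← e1]
        abel
      rw [final]
      have huF : ((uu : Fˣ) : F) ∈ L DU := hu
      exact sub_mem
        (add_mem (add_mem (add_mem
          (add_mem (neg_mem (add_mem (hMP' uu huF) (hMl uu wu huF hwmem)))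
            (add_mem (hMQ' uu huF) (hMl uu nu huF hnmem)))
          (hMQ wu hwmem)) (hMP' nu hnmem)) (hMl nu wu hnmem hwmem))
        (add_mem (hMQ (-1) hm1) (hMl nu (-1) hnmem hm1))

end
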